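/- Let E₀(v) be a finite nonempty set, D^e > 0 and δ_in^e real numbers, μ ∈ ℝ, and define δ_out^e = -μ δ_in^e + μ ω_v ∑_g (D^g)² δ_in^g with ω_v = 2/(∑_f (D^f)²). Then ∑_{e ∈ E₀(v)} (D^e)² |δ_out^e|² = μ² ∑_{e ∈ E₀(v)} (D^e)² |δ_in^e|². -/

import Mathlib

/-- Energy identity at a node for the observer error system:
∑ (D^e)² |δ_out^e|² = μ² ∑ (D^e)² |δ_in^e|². -/
theorem stmt5 {ι : Type*} [DecidableEq ι] (E : Finset ι) (hE : E.Nonempty)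
    (D δin δout : ι → ℝ) (hD : ∀ e ∈ E, 0 < D e) (μ : ℝ)
    (ω : ℝ) (hω : ω = 2 / ∑ f ∈ E, (D f) ^ 2)
    (hδout : ∀ e ∈ E, δout e = - μ * δin e + μ * ω * ∑ g ∈ E, (D g) ^ 2 * δin g) :
    ∑ e ∈ E, (D e) ^ 2 * |δout e| ^ 2 = μ ^ 2 * ∑ e ∈ E, (D e) ^ 2 * |δin e| ^ 2 := by
  set S := ∑ f ∈ E, (D f) ^ 2 with hSdef
  set T := ∑ g ∈ E, (D g) ^ 2 * δin g with hTdef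
  have hS : 0 < S := Finset.sum_pos (fun e he => pow_pos (hD e he) 2) hE
  have hωS : ω * S = 2 := by
    rw [hω]; field_simp
  have h1 : ∑ e ∈ E, (D e) ^ 2 * |δout e| ^ 2
      = ∑ e ∈ E, (μ ^ 2 * ((D e) ^ 2 * |δin e| ^ 2)
        + ((-2 * μ ^ 2 * ω * T) * ((D e) ^ 2 * δin e) + (μ ^ 2 * ω ^ 2 * T ^ 2) * (D e) ^ 2)) := by
    refine Finset.sum_congr rfl fun e he => ?_
    rw [sq_abs, sq_abs, hδout e he]
    ring
  rw [h1, Finset.sum_add_distrib, Finset.sum_add_distrib, ← Finset.mul_sum, ← Finset.mul_sum,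
    ← Finset.mul_sum, ← hTdef, ← hSdef]
  have : -2 * μ ^ 2 * ω * T * T + μ ^ 2 * ω ^ 2 * T ^ 2 * S = 0 := by
    have : μ ^ 2 * ω ^ 2 * T ^ 2 * S = μ ^ 2 * ω * T ^ 2 * (ω * S) := by ring
    rw [this, hωS]; ring
  linarith
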